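/- Let F = (f_1,…,f_N) be a uniform tight frame with bound A > 0 for an n-dimensional complex inner product space H and let p > 1. Then ⟨f_i, f_i/A⟩ = n/N for all i, the 1-erasure spectral average error of F with its canonical dual equals AE_R^{(1),p}(F, S_F^{-1}F) = n/N, and AE_R^{(1),p}(F, S_F^{-1}F) ≤ AE_R^{(1),p}(F, G) for every dual frame G of F; that is, the canonical dual S_F^{-1}F = (f_i/A) is a 1-erasure spectrally optimal dual of F. -/

import Mathlib

open scoped ComplexInnerProductSpace

theorem my_parseval {H : Type*} [NormedAddCommGroup H] [InnerProductSpace ℂ H]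
    {ι : Type*} [Fintype ι] (b : OrthonormalBasis ι ℂ H) (x : H) :
    ∑ j, ‖⟪b j, x⟫‖ ^ 2 = ‖x‖ ^ 2 := by
  have h := b.sum_inner_mul_inner x x
  have h2 : ∀ j, ⟪x, b j⟫ * ⟪b j, x⟫ = ((‖⟪b j, x⟫‖ ^ 2 : ℝ) : ℂ) := by
    intro j
    rw [← inner_conj_symm x (b j), RCLike.conj_mul]
    norm_cast
  simp_rw [h2] at h
  have := congrArg Complex.re h
  rw [Complex.re_sum] at this
  simpa [← Complex.ofReal_pow, inner_self_eq_norm_sq_to_K] using this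

/-- Let `F` be a uniform tight frame with bound `A > 0` for an
`n`-dimensional complex inner product space `H` and let `p > 1`.  Then
`⟨f i, f i / A⟩ = n/N` for all `i`, the `1`-erasure spectral average error of `F`
with its canonical dual equals `n/N`, and the canonical dual `(f i / A)`
minimizes the `1`-erasure spectral average error among all dual frames of `F`. -/
theorem stmt_14 {H : Type*} [NormedAddCommGroup H] [InnerProductSpace ℂ H]
    [FiniteDimensional ℂ H] (n N : ℕ) (hn : Module.finrank ℂ H = n)
    (f : Fin N → H) (A : ℝ) (hA : 0 < A)
    (htight : ∀ x : H, ∑ i, ‖⟪f i, x⟫‖ ^ 2 = A * ‖x‖ ^ 2)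
    (huniform : ∀ i j, ‖f i‖ = ‖f j‖)
    (p : ℝ) (hp : 1 < p) :
    (∀ i, ⟪(A : ℂ)⁻¹ • f i, f i⟫ = (n : ℂ) / N) ∧
      ((1 / (N : ℝ)) * ∑ i, ‖⟪(A : ℂ)⁻¹ • f i, f i⟫‖ ^ p) ^ (1 / p) = (n : ℝ) / N ∧
      (∀ g : Fin N → H, (∀ x : H, x = ∑ i, ⟪f i, x⟫ • g i) →
        ((1 / (N : ℝ)) * ∑ i, ‖⟪(A : ℂ)⁻¹ • f i, f i⟫‖ ^ p) ^ (1 / p) ≤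
          ((1 / (N : ℝ)) * ∑ i, ‖⟪g i, f i⟫‖ ^ p) ^ (1 / p)) := by
  classical
  have hp0 : (0:ℝ) < p := lt_trans one_pos hp
  obtain ⟨b⟩ : Nonempty (OrthonormalBasis (Fin n) ℂ H) :=
    ⟨(stdOrthonormalBasis ℂ H).reindex (finCongr hn)⟩
  -- total norm
  have key : ∑ i, ‖f i‖ ^ 2 = A * n := by
    calc ∑ i, ‖f i‖ ^ 2 = ∑ i, ∑ j, ‖⟪b j, f i⟫‖ ^ 2 :=
          Finset.sum_congr rfl fun i _ => (my_parseval b (f i)).symm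
      _ = ∑ j, ∑ i, ‖⟪b j, f i⟫‖ ^ 2 := Finset.sum_comm
      _ = ∑ j : Fin n, A * ‖b j‖ ^ 2 := by
          refine Finset.sum_congr rfl fun j _ => ?_
          rw [← htight (b j)]
          exact Finset.sum_congr rfl fun i _ => by rw [norm_inner_symm]
      _ = A * n := by simp [b.orthonormal.1, mul_comm]
  have hnorm : ∀ i : Fin N, ‖f i‖ ^ 2 = A * n / N := by
    intro i
    have hN : 0 < N := Fin.pos i
    have hNR : (0:ℝ) < N := Nat.cast_pos.mpr hN
    have h : ∑ j, ‖f j‖ ^ 2 = N * ‖f i‖ ^ 2 := by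
      rw [Finset.sum_congr rfl fun j _ => by rw [huniform j i]]
      simp [mul_comm]
    rw [h] at key
    field_simp
    linarith [key]
  -- part 1
  have part1 : ∀ i, ⟪(A : ℂ)⁻¹ • f i, f i⟫ = (n : ℂ) / N := by
    intro i
    have hN : ((N:ℝ)) ≠ 0 := Nat.cast_ne_zero.mpr (Fin.pos i).ne'
    have hNc : ((N:ℂ)) ≠ 0 := Nat.cast_ne_zero.mpr (Fin.pos i).ne'
    have hAc : ((A:ℂ)) ≠ 0 := by exact_mod_cast Complex.ofReal_ne_zero.mpr hA.ne'
    rw [inner_smul_left, inner_self_eq_norm_sq_to_K]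
    rw [map_inv₀, Complex.conj_ofReal]
    have hre : A⁻¹ * ‖f i‖ ^ 2 = (n:ℝ) / N := by
      rw [hnorm i]; field_simp
    have hc := congrArg (Complex.ofReal) hre
    push_cast at hc
    exact hc
  -- a helper for the degenerate case N = 0
  have hz : ∀ s : ℝ, ((1 / (((0:ℕ)):ℝ)) * s) ^ (1/p) = 0 := by
    intro s
    rw [Nat.cast_zero, div_zero, zero_mul, Real.zero_rpow (one_div_ne_zero hp0.ne')]
  -- part 2
  have part2 : ((1 / (N : ℝ)) * ∑ i, ‖⟪(A : ℂ)⁻¹ • f i, f i⟫‖ ^ p) ^ (1 / p) = (n : ℝ) / N := by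
    rcases Nat.eq_zero_or_pos N with hN | hN
    · subst hN
      rw [hz, Nat.cast_zero, div_zero]
    · have hNR : (0:ℝ) < N := Nat.cast_pos.mpr hN
      have hterm : ∀ i : Fin N, ‖⟪(A : ℂ)⁻¹ • f i, f i⟫‖ ^ p = ((n:ℝ)/N) ^ p := by
        intro i
        rw [part1 i]
        congr 1
        rw [show ((n : ℂ) / N) = (((n:ℝ)/N : ℝ) : ℂ) by push_cast; ring,
          Complex.norm_real, Real.norm_eq_abs, abs_of_nonneg (by positivity)]
      rw [Finset.sum_congr rfl fun i _ => hterm i, Finset.sum_const, Finset.card_univ,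
        Fintype.card_fin, nsmul_eq_mul, ← mul_assoc, one_div, inv_mul_cancel₀ hNR.ne',
        one_mul, ← Real.rpow_mul (by positivity), mul_one_div_cancel hp0.ne', Real.rpow_one]
  refine ⟨part1, part2, ?_⟩
  -- part 3
  intro g hg
  rcases Nat.eq_zero_or_pos N with hN | hN
  · subst hN
    rw [hz, hz]
  · have hNR : (0:ℝ) < N := Nat.cast_pos.mpr hN
    -- trace identity
    have htr : ∑ i, ⟪f i, g i⟫ = (n : ℂ) := by
      have h1 : ∀ j : Fin n, (1:ℂ) = ∑ i, ⟪f i, b j⟫ * ⟪b j, g i⟫ := by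
        intro j
        have hb : ⟪b j, b j⟫ = (1:ℂ) := by
          rw [inner_self_eq_norm_sq_to_K, b.orthonormal.1 j]; norm_num
        calc (1:ℂ) = ⟪b j, b j⟫ := hb.symm
          _ = ⟪b j, ∑ i, ⟪f i, b j⟫ • g i⟫ := by rw [← hg (b j)]
          _ = ∑ i, ⟪f i, b j⟫ * ⟪b j, g i⟫ := by
              rw [inner_sum]
              exact Finset.sum_congr rfl fun i _ => by rw [inner_smul_right]
      calc ∑ i, ⟪f i, g i⟫ = ∑ i, ∑ j, ⟪f i, b j⟫ * ⟪b j, g i⟫ :=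
            Finset.sum_congr rfl fun i _ => (b.sum_inner_mul_inner (f i) (g i)).symm
        _ = ∑ j, ∑ i, ⟪f i, b j⟫ * ⟪b j, g i⟫ := Finset.sum_comm
        _ = ∑ j : Fin n, (1:ℂ) := Finset.sum_congr rfl fun j _ => (h1 j).symm
        _ = (n : ℂ) := by simp
    have hsum : (n : ℝ) ≤ ∑ i, ‖⟪g i, f i⟫‖ := by
      have hna : ‖∑ i, ⟪f i, g i⟫‖ = (n:ℝ) := by rw [htr]; simp
      calc (n:ℝ) = ‖∑ i, ⟪f i, g i⟫‖ := hna.symm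
        _ ≤ ∑ i, ‖⟪f i, g i⟫‖ := norm_sum_le _ _
        _ = ∑ i, ‖⟪g i, f i⟫‖ :=
            Finset.sum_congr rfl fun i _ => norm_inner_symm _ _
    -- power mean inequality
    have hpm := Real.arith_mean_le_rpow_mean Finset.univ (fun _ : Fin N => 1 / (N:ℝ))
      (fun i => ‖⟪g i, f i⟫‖) (fun i _ => by positivity)
      (by rw [Finset.sum_const, Finset.card_univ, Fintype.card_fin, nsmul_eq_mul, one_div,
        mul_inv_cancel₀ hNR.ne']) (fun i _ => norm_nonneg _) hp.le
    simp only [← Finset.mul_sum] at hpm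
    have hL : (n:ℝ) / N ≤ 1 / (N:ℝ) * ∑ i, ‖⟪g i, f i⟫‖ := by
      rw [div_eq_mul_inv, mul_comm, ← one_div]
      exact mul_le_mul_of_nonneg_left hsum (by positivity)
    rw [part2]
    exact le_trans hL hpm
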